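/- arXiv:2506.03411 — 5 statements merged into one kernel-verified Lean document; each statement's English description precedes it below -/
import Mathlib

section
/- Let g be a linear separator in ℝ^d given by g(x) = sign(⟨w_g, x⟩ + b). If two points p⁺ = x₀ + ε·w_g and p⁻ = x₀ − ε·w_g (for some x₀ on the boundary of g, unit vector w_g, and ε > 0), labeled +1 and −1 respectively, are the unique pair of closest points between the two classes in a training set, then the maximum-margin separating hyperplane for that training set is exactly the boundary of g. -/
open scoped InnerProductSpace

/-- `(w, b)` (weakly) separates the labeled set `S`: every point is on the side of the
hyperplane matching its ±1 label. -/
def Separates {d : ℕ} (w : EuclideanSpace ℝ (Fin d)) (b : ℝ)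
    (S : Finset (EuclideanSpace ℝ (Fin d) × ℝ)) : Prop :=
  ∀ p ∈ S, 0 ≤ p.2 * (⟪w, p.1⟫_ℝ + b)

/-- The margin of the hyperplane `(w, b)` (with `‖w‖ = 1`) on the set `S`: the infimum
of distances from the data points to the hyperplane. -/
noncomputable def Margin {d : ℕ} (w : EuclideanSpace ℝ (Fin d)) (b : ℝ)
    (S : Finset (EuclideanSpace ℝ (Fin d) × ℝ)) : ℝ :=
  sInf {r : ℝ | ∃ p ∈ S, r = |⟪w, p.1⟫_ℝ + b|}

/-- `(w, b)` is a maximum-margin separator of `S`. -/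
def IsMaxMargin {d : ℕ} (w : EuclideanSpace ℝ (Fin d)) (b : ℝ)
    (S : Finset (EuclideanSpace ℝ (Fin d) × ℝ)) : Prop :=
  ‖w‖ = 1 ∧ Separates w b S ∧
    ∀ w' b', ‖w'‖ = 1 → Separates w' b' S → Margin w' b' S ≤ Margin w b S

/-- If `p⁺ = x₀ + ε • w_g` (labeled +1) and `p⁻ = x₀ - ε • w_g` (labeled -1),
with `x₀` on the boundary of `g`, are in the training set, and every other positive point
lies at distance `> ε` on the positive side and every other negative point at distance `> ε`
on the negative side, then the maximum-margin hyperplane of the training set is exactly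
the boundary of `g`. -/
theorem stmt_2 {d : ℕ} (wg : EuclideanSpace ℝ (Fin d)) (b : ℝ) (hwg : ‖wg‖ = 1)
    (x₀ : EuclideanSpace ℝ (Fin d)) (hx₀ : ⟪wg, x₀⟫_ℝ + b = 0)
    (ε : ℝ) (hε : 0 < ε)
    (S : Finset (EuclideanSpace ℝ (Fin d) × ℝ))
    (hlab : ∀ p ∈ S, p.2 = 1 ∨ p.2 = -1)
    (hplus : (x₀ + ε • wg, (1 : ℝ)) ∈ S)
    (hminus : (x₀ - ε • wg, (-1 : ℝ)) ∈ S)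
    (hposFar : ∀ p ∈ S, p.2 = (1 : ℝ) → p.1 ≠ x₀ + ε • wg → ε < ⟪wg, p.1⟫_ℝ + b)
    (hnegFar : ∀ p ∈ S, p.2 = (-1 : ℝ) → p.1 ≠ x₀ - ε • wg → ⟪wg, p.1⟫_ℝ + b < -ε) :
    IsMaxMargin wg b S ∧
      ∀ w' b', IsMaxMargin w' b' S →
        {x : EuclideanSpace ℝ (Fin d) | ⟪w', x⟫_ℝ + b' = 0} =
          {x : EuclideanSpace ℝ (Fin d) | ⟪wg, x⟫_ℝ + b = 0} := by
  have hip : ⟪wg, x₀ + ε • wg⟫_ℝ + b = ε := by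
    rw [inner_add_right, real_inner_smul_right, real_inner_self_eq_norm_sq, hwg]; nlinarith
  have him : ⟪wg, x₀ - ε • wg⟫_ℝ + b = -ε := by
    rw [inner_sub_right, real_inner_smul_right, real_inner_self_eq_norm_sq, hwg]; nlinarith
  -- every point has margin at least ε w.r.t. (wg, b), with correct sign
  have hkey : ∀ p ∈ S, ε ≤ p.2 * (⟪wg, p.1⟫_ℝ + b) := by
    intro p hp
    rcases hlab p hp with h1 | h1 <;> rw [h1]
    · by_cases hpe : p.1 = x₀ + ε • wg
      · rw [hpe, hip]; linarith
      · have := hposFar p hp h1 hpe; linarith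
    · by_cases hpe : p.1 = x₀ - ε • wg
      · rw [hpe, him]; linarith
      · have := hnegFar p hp h1 hpe; linarith
  have hsep : Separates wg b S := fun p hp => le_of_lt (lt_of_lt_of_le hε (hkey p hp))
  have habs : ∀ p ∈ S, ε ≤ |⟪wg, p.1⟫_ℝ + b| := by
    intro p hp
    have h := hkey p hp
    rcases hlab p hp with h1 | h1 <;> rw [h1] at h
    · rw [one_mul] at h; rw [abs_of_pos (lt_of_lt_of_le hε h)]; exact h
    · rw [abs_of_neg (by nlinarith)]; linarith
  have hbdd : ∀ w' b', BddBelow {r : ℝ | ∃ p ∈ S, r = |⟪w', p.1⟫_ℝ + b'|} := by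
    intro w' b'
    exact ⟨0, by rintro r ⟨p, hp, rfl⟩; exact abs_nonneg _⟩
  -- Margin wg b S = ε
  have hmar : Margin wg b S = ε := by
    apply le_antisymm
    · apply csInf_le (hbdd wg b)
      exact ⟨(x₀ + ε • wg, 1), hplus, by rw [hip, abs_of_pos hε]⟩
    · refine le_csInf ?_ ?_
      · exact ⟨|⟪wg, (x₀ + ε • wg : EuclideanSpace ℝ (Fin d))⟫_ℝ + b|,
          (x₀ + ε • wg, 1), hplus, rfl⟩
      rintro r ⟨p, hp, rfl⟩
      exact habs p hp
  -- Any unit separator has margin ≤ ε, and key quantities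
  have hmain : ∀ w' b', ‖w'‖ = 1 → Separates w' b' S →
      Margin w' b' S ≤ ⟪w', x₀ + ε • wg⟫_ℝ + b' ∧
      Margin w' b' S ≤ -(⟪w', x₀ - ε • wg⟫_ℝ + b') ∧
      (⟪w', x₀ + ε • wg⟫_ℝ + b') + -(⟪w', x₀ - ε • wg⟫_ℝ + b') ≤ 2 * ε := by
    intro w' b' hw' hsep'
    have ha : 0 ≤ ⟪w', x₀ + ε • wg⟫_ℝ + b' := by
      have := hsep' _ hplus; simpa using this
    have hc : ⟪w', x₀ - ε • wg⟫_ℝ + b' ≤ 0 := by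
      have h : (0:ℝ) ≤ (-1) * (⟪w', x₀ - ε • wg⟫_ℝ + b') := hsep' _ hminus
      linarith
    have hdiff : (⟪w', x₀ + ε • wg⟫_ℝ + b') - (⟪w', x₀ - ε • wg⟫_ℝ + b')
        = 2 * ε * ⟪w', wg⟫_ℝ := by
      rw [inner_add_right, inner_sub_right, real_inner_smul_right]; ring
    have hcs : ⟪w', wg⟫_ℝ ≤ 1 := by
      have := real_inner_le_norm w' wg
      rw [hw', hwg] at this; linarith
    refine ⟨?_, ?_, by nlinarith⟩
    · apply csInf_le (hbdd w' b')
      exact ⟨(x₀ + ε • wg, 1), hplus, (abs_of_nonneg ha).symm⟩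
    · apply csInf_le (hbdd w' b')
      refine ⟨(x₀ - ε • wg, -1), hminus, ?_⟩
      rw [abs_of_nonpos hc]
  have hmm : IsMaxMargin wg b S := by
    refine ⟨hwg, hsep, fun w' b' hw' hsep' => ?_⟩
    obtain ⟨h1, h2, h3⟩ := hmain w' b' hw' hsep'
    rw [hmar]; linarith
  refine ⟨hmm, fun w' b' hmm' => ?_⟩
  obtain ⟨hw', hsep', hmax'⟩ := hmm'
  have hge : ε ≤ Margin w' b' S := by
    have := hmax' wg b hwg hsep; rwa [hmar] at this
  obtain ⟨h1, h2, h3⟩ := hmain w' b' hw' hsep'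
  have ha : ⟪w', x₀ + ε • wg⟫_ℝ + b' = ε := by linarith
  have hc : ⟪w', x₀ - ε • wg⟫_ℝ + b' = -ε := by linarith
  have hdiff : (⟪w', x₀ + ε • wg⟫_ℝ + b') - (⟪w', x₀ - ε • wg⟫_ℝ + b')
      = 2 * ε * ⟪w', wg⟫_ℝ := by
    rw [inner_add_right, inner_sub_right, real_inner_smul_right]; ring
  have hone : ⟪w', wg⟫_ℝ = 1 := by
    rw [ha, hc] at hdiff; nlinarith
  have hweq : w' = wg := by
    have h := norm_sub_sq_real w' wg
    rw [hw', hwg, hone] at h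
    have : ‖w' - wg‖ = 0 := by nlinarith [norm_nonneg (w' - wg)]
    rwa [norm_eq_zero, sub_eq_zero] at this
  subst hweq
  have hbeq : b' = b := by linarith [ha, hip]
  rw [hbeq]
end

section
/- If f* and g are distinct parallel homogeneous-direction linear separators in ℝ^d (same unit normal vector w, offsets b_{f*} ≠ b_g), and δ = |b_{f*} − b_g| is the distance between their boundaries, then if the dataset labeled by f* contains a point x with distance to g's boundary strictly less than δ, no maximum-margin separator consistent with that dataset equals g. -/
open scoped InnerProductSpace

/-- The margin of a nonempty finite set is attained and is a lower bound. -/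
lemma margin_facts {d : ℕ} (w : EuclideanSpace ℝ (Fin d)) (b : ℝ)
    (S : Finset (EuclideanSpace ℝ (Fin d) × ℝ)) (hS : S.Nonempty) :
    (∃ p ∈ S, Margin w b S = |⟪w, p.1⟫_ℝ + b|) ∧
      ∀ q ∈ S, Margin w b S ≤ |⟪w, q.1⟫_ℝ + b| := by
  set f : EuclideanSpace ℝ (Fin d) × ℝ → ℝ := fun p => |⟪w, p.1⟫_ℝ + b| with hf
  have hTeq : {r : ℝ | ∃ p ∈ S, r = |⟪w, p.1⟫_ℝ + b|} = f '' ↑S := by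
    ext r
    simp only [Set.mem_setOf_eq, Set.mem_image, Finset.mem_coe, hf]
    constructor
    · rintro ⟨p, hp, rfl⟩; exact ⟨p, hp, rfl⟩
    · rintro ⟨p, hp, rfl⟩; exact ⟨p, hp, rfl⟩
  have hfin : {r : ℝ | ∃ p ∈ S, r = |⟪w, p.1⟫_ℝ + b|}.Finite := by
    rw [hTeq]; exact S.finite_toSet.image f
  obtain ⟨p₀, hp₀⟩ := hS
  have hne : {r : ℝ | ∃ p ∈ S, r = |⟪w, p.1⟫_ℝ + b|}.Nonempty :=
    ⟨f p₀, p₀, hp₀, rfl⟩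
  constructor
  · have := hne.csInf_mem hfin
    obtain ⟨p, hp, hpe⟩ := this
    exact ⟨p, hp, hpe⟩
  · intro q hq
    exact csInf_le hfin.bddBelow ⟨q, hq, rfl⟩

set_option maxHeartbeats 1000000 in
/-- `f*` and `g` are parallel separators with unit normal `w` and offsets
`b_f ≠ b_g` (WLOG `b_g < b_f`), `δ = b_f - b_g`. If the dataset labeled by `f*` contains a
point at distance `< δ` from `g`'s boundary, then no maximum-margin separator consistent
with the dataset has the same boundary as `g`. -/
theorem stmt_4 {d : ℕ} (w : EuclideanSpace ℝ (Fin d)) (hw : ‖w‖ = 1)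
    (bf bg : ℝ) (hlt : bg < bf)
    (S : Finset (EuclideanSpace ℝ (Fin d) × ℝ))
    (hlab : ∀ p ∈ S, p.2 = if 0 ≤ ⟪w, p.1⟫_ℝ + bf then (1 : ℝ) else -1)
    (hclose : ∃ p ∈ S, |⟪w, p.1⟫_ℝ + bg| < bf - bg) :
    ∀ w' b', IsMaxMargin w' b' S →
      {x : EuclideanSpace ℝ (Fin d) | ⟪w', x⟫_ℝ + b' = 0} ≠
        {x : EuclideanSpace ℝ (Fin d) | ⟪w, x⟫_ℝ + bg = 0} := by
  rintro w' b' ⟨hw', hsep, hmax⟩ heq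
  obtain ⟨p₀, hp₀S, hp₀⟩ := hclose
  have hSne : S.Nonempty := ⟨p₀, hp₀S⟩
  set δ := bf - bg with hδ
  have hδpos : 0 < δ := sub_pos.mpr hlt
  -- membership iff from set equality
  have hmem : ∀ x : EuclideanSpace ℝ (Fin d),
      (⟪w, x⟫_ℝ + bg = 0) → (⟪w', x⟫_ℝ + b' = 0) := by
    intro x hx
    have : x ∈ {x : EuclideanSpace ℝ (Fin d) | ⟪w, x⟫_ℝ + bg = 0} := hx
    rw [← heq] at this
    exact this
  set c : ℝ := ⟪w', w⟫_ℝ with hc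
  have hwsq : ⟪w, w⟫_ℝ = 1 := by
    rw [real_inner_self_eq_norm_sq, hw]; norm_num
  have hw'sq : ⟪w', w'⟫_ℝ = 1 := by
    rw [real_inner_self_eq_norm_sq, hw']; norm_num
  -- x₀ on g's boundary
  have hx₀g : ⟪w, (-bg) • w⟫_ℝ + bg = 0 := by
    rw [real_inner_smul_right, hwsq]; ring
  have hb' : b' = bg * c := by
    have := hmem _ hx₀g
    rw [real_inner_smul_right] at this
    linarith
  -- v := w' - c • w
  set v : EuclideanSpace ℝ (Fin d) := w' - c • w with hv
  have hwv : ⟪w, v⟫_ℝ = 0 := by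
    rw [hv, inner_sub_right, real_inner_smul_right, hwsq, real_inner_comm]
    ring
  have hxvg : ⟪w, (-bg) • w + v⟫_ℝ + bg = 0 := by
    rw [inner_add_right, real_inner_smul_right, hwsq, hwv]; ring
  have hw'v : ⟪w', v⟫_ℝ = 0 := by
    have := hmem _ hxvg
    rw [inner_add_right, real_inner_smul_right] at this
    rw [hb'] at this
    linarith
  have hcsq : c * c = 1 := by
    have := hw'v
    rw [hv, inner_sub_right, real_inner_smul_right, hw'sq, ← hc] at this
    linarith
  have hvzero : v = 0 := by
    have hnv : ⟪v, v⟫_ℝ = 0 := by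
      rw [hv]
      rw [inner_sub_left, real_inner_smul_left]
      rw [show ⟪w', w' - c • w⟫_ℝ = ⟪w', v⟫_ℝ from rfl,
        show ⟪w, w' - c • w⟫_ℝ = ⟪w, v⟫_ℝ from rfl]
      rw [hw'v, hwv]; ring
    exact inner_self_eq_zero.mp hnv
  have hw'eq : w' = c • w := by
    have := hvzero
    rw [hv, sub_eq_zero] at this
    exact this
  -- key pointwise identity
  have hkey : ∀ x : EuclideanSpace ℝ (Fin d),
      ⟪w', x⟫_ℝ + b' = c * (⟪w, x⟫_ℝ + bg) := by
    intro x
    rw [hw'eq, real_inner_smul_left, hb']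
    ring
  have habsc : |c| = 1 := by
    rcases mul_self_eq_one_iff.mp hcsq with h | h <;> rw [h] <;> norm_num
  have habs : ∀ x : EuclideanSpace ℝ (Fin d),
      |⟪w', x⟫_ℝ + b'| = |⟪w, x⟫_ℝ + bg| := by
    intro x
    rw [hkey, abs_mul, habsc, one_mul]
  -- margin equality
  have hM : Margin w' b' S = Margin w bg S := by
    unfold Margin
    congr 1
    ext r
    simp only [Set.mem_setOf_eq]
    constructor
    · rintro ⟨p, hp, rfl⟩; exact ⟨p, hp, habs p.1⟩
    · rintro ⟨p, hp, rfl⟩; exact ⟨p, hp, (habs p.1).symm⟩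
  obtain ⟨⟨p₁, hp₁S, hp₁⟩, hlow⟩ := margin_facts w bg S hSne
  set m := Margin w bg S with hm
  have hm0 : 0 ≤ m := hp₁ ▸ abs_nonneg _
  have hmlt : m < δ := lt_of_le_of_lt (hlow p₀ hp₀S) hp₀
  -- case on c
  rcases mul_self_eq_one_iff.mp hcsq with hc1 | hc1
  · -- c = 1 : competitor b'' = bg + (δ - m)
    set b'' := bg + (δ - m) with hb''
    have hsep' : ∀ p ∈ S, 0 ≤ p.2 * (⟪w, p.1⟫_ℝ + bg) := by
      intro p hp
      have := hsep p hp
      rw [hkey, hc1, one_mul] at this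
      exact this
    have hsep'' : Separates w b'' S := by
      intro p hp
      have hl := hlab p hp
      by_cases hpos : 0 ≤ ⟪w, p.1⟫_ℝ + bf
      · rw [if_pos hpos] at hl
        have ht : 0 ≤ ⟪w, p.1⟫_ℝ + bg := by
          have := hsep' p hp; rw [hl, one_mul] at this; exact this
        rw [hl, one_mul, hb'']
        nlinarith
      · rw [if_neg hpos] at hl
        push_neg at hpos
        rw [hl, hb'']
        nlinarith
    have hle : Margin w b'' S ≤ m := by
      calc Margin w b'' S ≤ Margin w' b' S := hmax w b'' hw hsep''
        _ = m := hM
    obtain ⟨⟨q, hqS, hq⟩, _⟩ := margin_facts w b'' S hSne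
    have hqlow : m ≤ |⟪w, q.1⟫_ℝ + bg| := hlow q hqS
    have hql := hlab q hqS
    by_cases hqpos : 0 ≤ ⟪w, q.1⟫_ℝ + bf
    · have ht : 0 ≤ ⟪w, q.1⟫_ℝ + bg := by
        have := hsep' q hqS; rw [hql, if_pos hqpos, one_mul] at this; exact this
      have ht' : m ≤ ⟪w, q.1⟫_ℝ + bg := by
        rwa [abs_of_nonneg ht] at hqlow
      have : δ ≤ |⟪w, q.1⟫_ℝ + b''| := by
        rw [hb'', show ⟪w, q.1⟫_ℝ + (bg + (δ - m)) = (⟪w, q.1⟫_ℝ + bg) + (δ - m) by ring,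
          abs_of_nonneg (by linarith)]
        linarith
      linarith [hq ▸ hle, hmlt]
    · push_neg at hqpos
      have : m < |⟪w, q.1⟫_ℝ + b''| := by
        rw [hb'', show ⟪w, q.1⟫_ℝ + (bg + (δ - m)) = (⟪w, q.1⟫_ℝ + bf) - m by rw [hδ]; ring,
          abs_of_neg (by linarith)]
        linarith
      linarith [hq ▸ hle]
  · -- c = -1 : competitor b'' = bg + δ + m + 1
    set b'' := bg + δ + m + 1 with hb''
    have hsep' : ∀ p ∈ S, p.2 * (⟪w, p.1⟫_ℝ + bg) ≤ 0 := by
      intro p hp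
      have := hsep p hp
      rw [hkey, hc1] at this
      nlinarith
    -- every point is positively labeled with bg-value in [-δ, 0]
    have hall : ∀ p ∈ S, -δ ≤ ⟪w, p.1⟫_ℝ + bg ∧ ⟪w, p.1⟫_ℝ + bg ≤ 0 := by
      intro p hp
      have hl := hlab p hp
      by_cases hpos : 0 ≤ ⟪w, p.1⟫_ℝ + bf
      · rw [if_pos hpos] at hl
        have := hsep' p hp
        rw [hl, one_mul] at this
        constructor
        · rw [hδ]; linarith
        · exact this
      · rw [if_neg hpos] at hl
        push_neg at hpos
        have := hsep' p hp
        rw [hl] at this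
        have h1 : 0 ≤ ⟪w, p.1⟫_ℝ + bg := by linarith
        have h2 : ⟪w, p.1⟫_ℝ + bg < 0 := by
          have hδ' : δ = bf - bg := hδ
          linarith
        linarith
    have hsep'' : Separates w b'' S := by
      intro p hp
      obtain ⟨h1, h2⟩ := hall p hp
      have hl := hlab p hp
      have hpos : 0 ≤ ⟪w, p.1⟫_ℝ + bf := by rw [hδ] at h1; linarith
      rw [if_pos hpos] at hl
      rw [hl, one_mul, hb'']
      linarith
    have hle : Margin w b'' S ≤ m := by
      calc Margin w b'' S ≤ Margin w' b' S := hmax w b'' hw hsep''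
        _ = m := hM
    obtain ⟨⟨q, hqS, hq⟩, _⟩ := margin_facts w b'' S hSne
    obtain ⟨h1, _⟩ := hall q hqS
    have : m + 1 ≤ |⟪w, q.1⟫_ℝ + b''| := by
      rw [hb'', abs_of_nonneg (by linarith)]
      linarith
    linarith [hq ▸ hle]
end

section
/- A greedy (myopic) single-point strategy for a strategic litigator with a 1D nearest-neighbor learner can cause irreversible error: there exist f*, g, and an initial configuration such that some single point p minimizes the error after one addition among all single points, yet after adding (p, f*(p)) no further set of points labeled by f* can reduce the error to 0, while a different two-point choice achieves error 0. -/
open scoped Classical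

/-- 1D nearest-neighbor classifier: the label of (a) nearest training point;
on the empty training set it defaults to +1 (all-positive). -/
noncomputable def nn (S : Finset (ℝ × ℝ)) (x : ℝ) : ℝ :=
  if h : S.Nonempty then ((S.exists_min_image (fun p => |x - p.1|) h).choose).2 else 1

/-- Error of the nearest-neighbor classifier trained on `S` with respect to the goal
function `g`, under the uniform distribution on `[0,1]` (Lebesgue measure of the
disagreement region). -/
noncomputable def nnErr (S : Finset (ℝ × ℝ)) (g : ℝ → ℝ) : ENNReal :=
  MeasureTheory.volume {x ∈ Set.Icc (0 : ℝ) 1 | nn S x ≠ g x}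

lemma nn_eq_of (S : Finset (ℝ × ℝ)) (hS : S.Nonempty) (x v : ℝ)
    (h : ∀ q ∈ S, (∀ q' ∈ S, |x - q.1| ≤ |x - q'.1|) → q.2 = v) :
    nn S x = v := by
  rw [nn, dif_pos hS]
  obtain ⟨hmem, hmin⟩ := (S.exists_min_image (fun p => |x - p.1|) hS).choose_spec
  exact h _ hmem hmin

/-- Greedy choice can cause irreversible error in 1D nearest-neighbor
litigation. With thresholds `f*(x) = -1 ↔ x ≥ a` and `g(x) = -1 ↔ x ≥ b` (`a = 1/4`,
`b = 1/2`), no historical data: the point `p = a` is labeled `-1` by `f*`; there is a pair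
of points (labeled by `f*`) achieving error 0, but after adding `(p, f*(p))` every further
finite set of points labeled by `f*` leaves strictly positive error w.r.t. `g`. -/
theorem stmt_7 (a b : ℝ) (ha : a = 1 / 4) (hb : b = 1 / 2)
    (fstar g : ℝ → ℝ)
    (hf : ∀ x, fstar x = if x < a then 1 else -1)
    (hg : ∀ x, g x = if x < b then 1 else -1)
    (p : ℝ) (hp : p = a) :
    fstar p = -1 ∧
      (∃ q₁ q₂ : ℝ, nnErr {(q₁, fstar q₁), (q₂, fstar q₂)} g = 0) ∧
      (∀ Q : Finset ℝ,
        0 < nnErr (insert (p, fstar p) (Q.image fun q => (q, fstar q))) g) := by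
  subst hp ha hb
  have hfp : fstar (1/4 : ℝ) = -1 := by rw [hf]; norm_num
  refine ⟨hfp, ?_, ?_⟩
  · refine ⟨0, 1, ?_⟩
    have h0 : fstar 0 = 1 := by rw [hf]; norm_num
    have h1 : fstar 1 = -1 := by rw [hf]; norm_num
    have hsub : {x ∈ Set.Icc (0:ℝ) 1 | nn {((0:ℝ), fstar 0), ((1:ℝ), fstar 1)} x ≠ g x}
        ⊆ {(1/2 : ℝ)} := by
      rintro x ⟨⟨hx0, hx1⟩, hne⟩
      by_contra hx
      have hx' : x ≠ 1/2 := by simpa using hx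
      have hS : ({((0:ℝ), fstar 0), ((1:ℝ), fstar 1)} : Finset (ℝ × ℝ)).Nonempty := by
        simp
      rcases lt_or_gt_of_ne hx' with hlt | hgt
      · apply hne
        rw [hg]
        rw [if_pos hlt]
        apply nn_eq_of _ hS
        intro q hq hmin
        simp only [Finset.mem_insert, Finset.mem_singleton] at hq
        rcases hq with rfl | rfl
        · exact h0
        · exfalso
          have := hmin ((0:ℝ), fstar 0) (by simp)
          simp only at this
          rw [sub_zero, abs_of_nonneg hx0, abs_of_nonpos (by linarith : x - 1 ≤ 0)] at this
          linarith
      · apply hne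
        rw [hg]
        rw [if_neg (by linarith)]
        apply nn_eq_of _ hS
        intro q hq hmin
        simp only [Finset.mem_insert, Finset.mem_singleton] at hq
        rcases hq with rfl | rfl
        · exfalso
          have := hmin ((1:ℝ), fstar 1) (by simp)
          simp only at this
          rw [sub_zero, abs_of_nonneg hx0, abs_of_nonpos (by linarith : x - 1 ≤ 0)] at this
          linarith
        · exact h1
    have := MeasureTheory.measure_mono (μ := MeasureTheory.volume) hsub
    rw [Real.volume_singleton] at this
    exact le_antisymm (by simpa [nnErr] using this) zero_le
  · intro Q
    set S := insert ((1/4 : ℝ), fstar (1/4)) (Q.image fun q => (q, fstar q)) with hSdef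
    have hSne : S.Nonempty := ⟨_, Finset.mem_insert_self _ _⟩
    have hmemA : ((1/4 : ℝ), (-1 : ℝ)) ∈ S := by rw [hSdef, hfp] at *; exact Finset.mem_insert_self _ _
    have hlab : ∀ z ∈ S, z.2 = -1 ∨ z.1 < 1/4 := by
      intro z hz
      rw [hSdef] at hz
      rcases Finset.mem_insert.1 hz with rfl | hz
      · left; exact hfp
      · obtain ⟨q, _, rfl⟩ := Finset.mem_image.1 hz
        by_cases hq : q < 1/4
        · right; exact hq
        · left; rw [hf, if_neg hq]
    have hsub : Set.Ioo (1/4 : ℝ) (1/2) ⊆ {x ∈ Set.Icc (0:ℝ) 1 | nn S x ≠ g x} := by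
      rintro x ⟨hxa, hxb⟩
      refine ⟨⟨by linarith, by linarith⟩, ?_⟩
      have hnn : nn S x = -1 := by
        apply nn_eq_of _ hSne
        intro q hq hmin
        rcases hlab q hq with h | h
        · exact h
        · exfalso
          have := hmin ((1/4 : ℝ), (-1:ℝ)) hmemA
          simp only at this
          rw [abs_of_nonneg (by linarith : (0:ℝ) ≤ x - 1/4),
              abs_of_nonneg (by linarith : (0:ℝ) ≤ x - q.1)] at this
          linarith
      rw [hnn, hg, if_pos hxb]
      norm_num
    have hv : (0 : ENNReal) < MeasureTheory.volume (Set.Ioo (1/4 : ℝ) (1/2)) := by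
      rw [Real.volume_Ioo]
      simp [ENNReal.ofReal_pos]
      norm_num
    refine lt_of_lt_of_le hv ?_
    rw [nnErr]
    exact MeasureTheory.measure_mono hsub
end

section
/- In the 1D nearest neighbor setting, if the litigator adds a positive point u and a negative point v with u < v, symmetric about the boundary b of the goal threshold function g (i.e., (u+v)/2 = b), and u, v are each strictly closer to b than any historical point, then the nearest-neighbor classifier on the augmented dataset equals g almost everywhere. -/
open scoped Classical

lemma nn_spec (S : Finset (ℝ × ℝ)) (x : ℝ) (h : S.Nonempty) :
    ∃ m ∈ S, (∀ p ∈ S, |x - m.1| ≤ |x - p.1|) ∧ nn S x = m.2 := by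
  obtain ⟨hm, hmin⟩ := (S.exists_min_image (fun p => |x - p.1|) h).choose_spec
  refine ⟨_, hm, hmin, ?_⟩
  simp [nn, h]

/-- If the litigator adds a positive point `u` and a negative point `v`,
symmetric about the boundary `b` of the goal threshold `g` and strictly closer to `b` than
every historical point (the historical data being consistent with `g`), then the
nearest-neighbor classifier on the augmented dataset equals `g` everywhere off `b`. -/
theorem stmt_9 (Sh : Finset (ℝ × ℝ)) (b u v : ℝ) (g : ℝ → ℝ)
    (hg : ∀ x, g x = if x < b then 1 else -1)
    (hcons : ∀ p ∈ Sh, (p.1 < b → p.2 = 1) ∧ (b < p.1 → p.2 = -1))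
    (hu : u < b) (hv : b < v) (hsym : b - u = v - b)
    (hfar : ∀ p ∈ Sh, b - u < |p.1 - b|) :
    ∀ x : ℝ, x ≠ b → nn (insert (u, 1) (insert (v, -1) Sh)) x = g x := by
  intro x hx
  set S := insert (u, 1) (insert (v, -1) Sh) with hS
  have hne : S.Nonempty := ⟨(u,1), Finset.mem_insert_self _ _⟩
  obtain ⟨m, hmS, hmin, hval⟩ := nn_spec S x hne
  have humem : (u, 1) ∈ S := Finset.mem_insert_self _ _
  have hvmem : (v, -1) ∈ S := Finset.mem_insert_of_mem (Finset.mem_insert_self _ _)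
  rw [hval, hg]
  rcases lt_or_gt_of_ne hx with hxb | hxb
  · -- x < b : answer should be 1
    rw [if_pos hxb]
    have hmu := hmin _ humem
    have habs_v : |x - v| = v - x := by
      rw [abs_sub_comm]; exact abs_of_nonneg (by linarith)
    have hlt : |x - u| < |x - v| := by
      rw [habs_v]; rcases abs_cases (x - u) with ⟨h1, _⟩ | ⟨h1, _⟩ <;> linarith
    have hm1 : m.1 < b := by
      by_contra hge
      push_neg at hge
      rcases Finset.mem_insert.mp hmS with heq | hm'
      · rw [heq] at hge; simp at hge; linarith
      rcases Finset.mem_insert.mp hm' with heq | hmSh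
      · rw [heq] at hmu; simp only at hmu; linarith
      · have hf := hfar m hmSh
        rw [abs_of_nonneg (by linarith : (0:ℝ) ≤ m.1 - b)] at hf
        have habs_m : |x - m.1| = m.1 - x := by
          rw [abs_sub_comm]; exact abs_of_nonneg (by linarith)
        rw [habs_m] at hmu
        linarith
    rcases Finset.mem_insert.mp hmS with heq | hm'
    · rw [heq]
    rcases Finset.mem_insert.mp hm' with heq | hmSh
    · rw [heq] at hm1; simp at hm1; linarith
    · exact (hcons m hmSh).1 hm1
  · -- b < x : answer should be -1
    rw [if_neg (not_lt.mpr (le_of_lt hxb))]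
    have hmv := hmin _ hvmem
    have habs_u : |x - u| = x - u := abs_of_nonneg (by linarith)
    have hlt : |x - v| < |x - u| := by
      rw [habs_u]; rcases abs_cases (x - v) with ⟨h1, _⟩ | ⟨h1, _⟩ <;> linarith
    have hm1 : b < m.1 := by
      by_contra hge
      push_neg at hge
      rcases Finset.mem_insert.mp hmS with heq | hm'
      · rw [heq] at hmv; simp only at hmv; linarith
      rcases Finset.mem_insert.mp hm' with heq | hmSh
      · rw [heq] at hge; simp at hge; linarith
      · have hf := hfar m hmSh
        rw [abs_of_nonpos (by linarith : m.1 - b ≤ (0:ℝ))] at hf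
        have habs_m : |x - m.1| = x - m.1 := abs_of_nonneg (by linarith)
        rw [habs_m] at hmv
        linarith
    rcases Finset.mem_insert.mp hmS with heq | hm'
    · rw [heq] at hm1; simp at hm1; linarith
    rcases Finset.mem_insert.mp hm' with heq | hmSh
    · rw [heq]
    · exact (hcons m hmSh).2 hm1
end

section
/- The output of a hard-margin SVM on a linearly separable dataset in ℝ^d is determined by at most d+1 support vectors: there exists a subset T of the dataset of size at most d+1 such that the maximum-margin hyperplane for T equals the maximum-margin hyperplane for the full dataset. -/
open scoped InnerProductSpace Classical

private lemma conic_caratheodory {F : Type*} [AddCommGroup F] [Module ℝ F]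
    (Z : Finset F) :
    ∀ ν : F → ℝ, (∀ u ∈ Z, 0 ≤ ν u) →
      ∃ Z' : Finset F, Z' ⊆ Z ∧ LinearIndependent ℝ (fun u : Z' => (u : F)) ∧
        ∃ ν' : F → ℝ, (∀ u ∈ Z', 0 ≤ ν' u) ∧ ∑ u ∈ Z', ν' u • u = ∑ u ∈ Z, ν u • u := by
  classical
  induction Z using Finset.strongInduction with
  | _ Z ih =>
    intro ν hν
    by_cases hli : LinearIndependent ℝ (fun u : Z => (u : F))
    · exact ⟨Z, subset_rfl, hli, ν, hν, rfl⟩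
    · rw [Fintype.linearIndependent_iff] at hli
      push_neg at hli
      obtain ⟨g0, hg00, i0, hgi0⟩ := hli
      have main : ∀ g : {x // x ∈ Z} → ℝ, (∑ j : {x // x ∈ Z}, g j • (j : F)) = 0 →
          ∀ i : {x // x ∈ Z}, 0 < g i →
          ∃ Z' : Finset F, Z' ⊆ Z ∧ LinearIndependent ℝ (fun u : Z' => (u : F)) ∧
            ∃ ν' : F → ℝ, (∀ u ∈ Z', 0 ≤ ν' u) ∧
              ∑ u ∈ Z', ν' u • u = ∑ u ∈ Z, ν u • u := by
        intro g hg0 i hgi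
        have hgA : ∃ gA : F → ℝ, (∀ j : {x // x ∈ Z}, gA (j : F) = g j) ∧
            (∀ u, u ∉ Z → gA u = 0) :=
          ⟨fun u => if h : u ∈ Z then g ⟨u, h⟩ else 0,
            fun j => by simp [j.2], fun u hu => by simp [hu]⟩
        obtain ⟨gA, hgA1, hgA2⟩ := hgA
        have hsum0 : ∑ u ∈ Z, gA u • u = 0 := by
          rw [← Finset.sum_attach Z (fun u => gA u • u), ← hg0, ← Finset.univ_eq_attach]
          exact Finset.sum_congr rfl fun j _ => by rw [hgA1]
        set Q : Finset F := Z.filter (fun u => 0 < gA u) with hQdef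
        have hiQ : (i : F) ∈ Q := by
          simp only [hQdef, Finset.mem_filter]
          exact ⟨i.2, by rw [hgA1]; exact hgi⟩
        have hQ : Q.Nonempty := ⟨i, hiQ⟩
        obtain ⟨u0, hu0Q, hu0⟩ := Finset.exists_mem_eq_inf' hQ (fun u => ν u / gA u)
        set tmin : ℝ := Q.inf' hQ (fun u => ν u / gA u) with htmin
        have hu0Z : u0 ∈ Z := (Finset.mem_filter.mp hu0Q).1
        have hu0pos : 0 < gA u0 := (Finset.mem_filter.mp hu0Q).2
        have htnn : 0 ≤ tmin := by
          apply Finset.le_inf'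
          intro u hu
          have h := Finset.mem_filter.mp hu
          exact div_nonneg (hν u h.1) h.2.le
        have hν2nn : ∀ u ∈ Z, 0 ≤ ν u - tmin * gA u := by
          intro u hu
          by_cases hpos : 0 < gA u
          · have h1 : tmin ≤ ν u / gA u := Finset.inf'_le _ (Finset.mem_filter.mpr ⟨hu, hpos⟩)
            have := (le_div_iff₀ hpos).mp h1
            linarith
          · push_neg at hpos
            have h2 : tmin * gA u ≤ 0 := mul_nonpos_of_nonneg_of_nonpos htnn hpos
            have := hν u hu
            linarith
        have hν2u0 : ν u0 - tmin * gA u0 = 0 := by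
          rw [hu0]
          field_simp
          ring
        have hsum2 : ∑ u ∈ Z, (ν u - tmin * gA u) • u = ∑ u ∈ Z, ν u • u := by
          simp only [sub_smul, Finset.sum_sub_distrib, mul_smul, ← Finset.smul_sum, hsum0,
            smul_zero, sub_zero]
        obtain ⟨Z', hZ'sub, hli', ν', hν', hν'sum⟩ :=
          ih (Z.erase u0) (Finset.erase_ssubset hu0Z) (fun u => ν u - tmin * gA u)
            (fun u hu => hν2nn u (Finset.mem_of_mem_erase hu))
        refine ⟨Z', hZ'sub.trans (Finset.erase_subset _ _), hli', ν', hν', ?_⟩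
        rw [hν'sum, Finset.sum_erase _ (by rw [hν2u0, zero_smul]), hsum2]
      rcases hgi0.lt_or_gt with hneg | hpos
      · refine main (-g0) ?_ i0 (by simpa using hneg)
        simp only [Pi.neg_apply, neg_smul, Finset.sum_neg_distrib, hg00, neg_zero]
      · exact main g0 hg00 i0 hpos

private lemma cone_isClosed {F : Type*} [NormedAddCommGroup F] [NormedSpace ℝ F]
    [FiniteDimensional ℝ F] (Z : Finset F) :
    IsClosed {x : F | ∃ ν : F → ℝ, (∀ u ∈ Z, 0 ≤ ν u) ∧ ∑ u ∈ Z, ν u • u = x} := by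
  classical
  have hdecomp : {x : F | ∃ ν : F → ℝ, (∀ u ∈ Z, 0 ≤ ν u) ∧ ∑ u ∈ Z, ν u • u = x} =
      ⋃ (Z' : Finset F) (_ : Z' ∈ Z.powerset.filter
          (fun T : Finset F => LinearIndependent ℝ (fun u : T => (u : F)))),
        {x : F | ∃ ν : F → ℝ, (∀ u ∈ Z', 0 ≤ ν u) ∧ ∑ u ∈ Z', ν u • u = x} := by
    ext x
    constructor
    · rintro ⟨ν, hν, hsum⟩
      obtain ⟨Z', hsub, hli, ν', hν', hν'sum⟩ := conic_caratheodory Z ν hν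
      refine Set.mem_iUnion.mpr ⟨Z', Set.mem_iUnion.mpr ⟨?_, ν', hν', by rw [hν'sum, hsum]⟩⟩
      simp only [Finset.mem_filter, Finset.mem_powerset]
      exact ⟨hsub, hli⟩
    · intro hx
      simp only [Set.mem_iUnion] at hx
      obtain ⟨Z', hZ', ν', hν', hsum⟩ := hx
      simp only [Finset.mem_filter, Finset.mem_powerset] at hZ'
      refine ⟨fun u => if u ∈ Z' then ν' u else 0, fun u _ => ?_, ?_⟩
      · by_cases h : u ∈ Z'
        · simpa [h] using hν' u h
        · simp [h]
      · rw [← Finset.sum_subset hZ'.1 (fun u _ hu => by simp [hu]), ← hsum]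
        exact Finset.sum_congr rfl fun u hu => by simp [hu]
  rw [hdecomp]
  apply isClosed_biUnion_finset
  intro Z' hZ'
  simp only [Finset.mem_filter, Finset.mem_powerset] at hZ'
  obtain ⟨-, hli⟩ := hZ'
  set L : ({u // u ∈ Z'} → ℝ) →ₗ[ℝ] F :=
    { toFun := fun ν => ∑ i : {u // u ∈ Z'}, ν i • (i : F)
      map_add' := by intro x y; simp [add_smul, Finset.sum_add_distrib]
      map_smul' := by intro c x; simp [mul_smul, ← Finset.smul_sum] } with hL
  have hker : LinearMap.ker L = ⊥ := by
    rw [LinearMap.ker_eq_bot']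
    intro ν hν
    funext i
    exact Fintype.linearIndependent_iff.mp hli ν hν i
  have hemb := L.isClosedEmbedding_of_injective hker
  have himage : {x : F | ∃ ν : F → ℝ, (∀ u ∈ Z', 0 ≤ ν u) ∧ ∑ u ∈ Z', ν u • u = x} =
      L '' {ν : {u // u ∈ Z'} → ℝ | ∀ i, 0 ≤ ν i} := by
    ext x
    constructor
    · rintro ⟨ν, hν, hsum⟩
      refine ⟨fun i => ν i, fun i => hν i i.2, ?_⟩
      show ∑ i : {u // u ∈ Z'}, ν i • (i : F) = x
      rw [Finset.sum_coe_sort Z' (fun u => ν u • u)]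
      exact hsum
    · rintro ⟨ν, hν, rfl⟩
      refine ⟨fun u => if h : u ∈ Z' then ν ⟨u, h⟩ else 0, fun u hu => ?_, ?_⟩
      · simp only [hu, dif_pos]
        exact hν _
      · show _ = ∑ i : {u // u ∈ Z'}, ν i • (i : F)
        rw [← Finset.sum_coe_sort Z' (fun u => (if h : u ∈ Z' then ν ⟨u, h⟩ else 0) • u)]
        exact Finset.sum_congr rfl fun i _ => by simp [i.2]
  rw [himage]
  apply hemb.isClosedMap
  have horth : {ν : {u // u ∈ Z'} → ℝ | ∀ i, 0 ≤ ν i} = ⋂ i, {ν | 0 ≤ ν i} := by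
    ext; simp [Set.mem_iInter]
  rw [horth]
  exact isClosed_iInter fun i => isClosed_le continuous_const (continuous_apply i)

section MarginAux
variable {d : ℕ} {w : EuclideanSpace ℝ (Fin d)} {b : ℝ}
  {S : Finset (EuclideanSpace ℝ (Fin d) × ℝ)}

private lemma margin_set_eq :
    {r : ℝ | ∃ p ∈ S, r = |⟪w, p.1⟫_ℝ + b|} =
      ↑(S.image (fun p => |⟪w, p.1⟫_ℝ + b|)) := by
  ext r
  simp only [Set.mem_setOf_eq, Finset.coe_image, Set.mem_image, Finset.mem_coe]
  constructor
  · rintro ⟨p, hp, rfl⟩; exact ⟨p, hp, rfl⟩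
  · rintro ⟨p, hp, rfl⟩; exact ⟨p, hp, rfl⟩

private lemma margin_le {p : EuclideanSpace ℝ (Fin d) × ℝ} (hp : p ∈ S) :
    Margin w b S ≤ |⟪w, p.1⟫_ℝ + b| := by
  rw [Margin, margin_set_eq]
  refine csInf_le (Finset.bddBelow _) ?_
  simp only [Finset.coe_image, Set.mem_image, Finset.mem_coe]
  exact ⟨p, hp, rfl⟩

private lemma margin_mem (hS : S.Nonempty) :
    ∃ p ∈ S, Margin w b S = |⟪w, p.1⟫_ℝ + b| := by
  have h : Margin w b S ∈ {r : ℝ | ∃ p ∈ S, r = |⟪w, p.1⟫_ℝ + b|} := by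
    rw [Margin]
    apply Set.Nonempty.csInf_mem
    · obtain ⟨p, hp⟩ := hS; exact ⟨_, p, hp, rfl⟩
    · rw [margin_set_eq]; exact Finset.finite_toSet _
  exact h

private lemma le_margin (hS : S.Nonempty) {r : ℝ}
    (h : ∀ p ∈ S, r ≤ |⟪w, p.1⟫_ℝ + b|) : r ≤ Margin w b S := by
  rw [Margin]
  apply le_csInf
  · obtain ⟨p, hp⟩ := hS; exact ⟨_, p, hp, rfl⟩
  · rintro x ⟨p, hp, rfl⟩; exact h p hp

private lemma abs_eq_label {y f : ℝ} (hy : y = 1 ∨ y = -1) (h : 0 ≤ y * f) :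
    |f| = y * f := by
  rcases hy with rfl | rfl
  · rw [one_mul] at h ⊢; exact abs_of_nonneg h
  · rw [neg_one_mul] at h ⊢
    rw [abs_of_nonpos (by linarith)]

end MarginAux

set_option maxHeartbeats 1000000

/-- The hard-margin SVM output on a linearly separable dataset in R^d is
determined by at most `d + 1` support vectors: there is a subset `T ⊆ S` of size at most
`d + 1` whose maximum-margin hyperplane coincides (as a hyperplane) with that of `S`. -/
theorem stmt_11 {d : ℕ} (S : Finset (EuclideanSpace ℝ (Fin d) × ℝ))
    (hlab : ∀ p ∈ S, p.2 = 1 ∨ p.2 = -1)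
    (hpos : ∃ p ∈ S, p.2 = (1 : ℝ)) (hneg : ∃ p ∈ S, p.2 = (-1 : ℝ))
    (hsep : ∃ w' b', ‖w'‖ = 1 ∧ ∀ p ∈ S, 0 < p.2 * (⟪w', p.1⟫_ℝ + b'))
    (w : EuclideanSpace ℝ (Fin d)) (b : ℝ) (hmm : IsMaxMargin w b S) :
    ∃ T ⊆ S, T.card ≤ d + 1 ∧ IsMaxMargin w b T ∧
      ∀ w' b', IsMaxMargin w' b' T →
        {x : EuclideanSpace ℝ (Fin d) | ⟪w', x⟫_ℝ + b' = 0} =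
          {x : EuclideanSpace ℝ (Fin d) | ⟪w, x⟫_ℝ + b = 0} := by
  classical
  obtain ⟨w0, b0, hw0, hsep0⟩ := hsep
  obtain ⟨pp0, hpp0S, hpp0⟩ := hpos
  obtain ⟨pn0, hpn0S, hpn0⟩ := hneg
  have hSne : S.Nonempty := ⟨pp0, hpp0S⟩
  set μ := Margin w b S with hμ
  have hsep0' : Separates w0 b0 S := fun p hp => (hsep0 p hp).le
  have hm0pos : 0 < Margin w0 b0 S := by
    obtain ⟨p, hp, hpe⟩ := margin_mem (w := w0) (b := b0) hSne
    rw [hpe, abs_pos]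
    intro h
    have h2 := hsep0 p hp
    rw [h, mul_zero] at h2
    exact lt_irrefl _ h2
  have hμpos : 0 < μ := lt_of_lt_of_le hm0pos (hmm.2.2 w0 b0 hw0 hsep0')
  have hori : ∀ p ∈ S, μ ≤ p.2 * (⟪w, p.1⟫_ℝ + b) := by
    intro p hp
    have h1 := margin_le (w := w) (b := b) hp
    rwa [abs_eq_label (hlab p hp) (hmm.2.1 p hp)] at h1
  set v : EuclideanSpace ℝ (Fin d) := μ⁻¹ • w with hv
  set c : ℝ := μ⁻¹ * b with hc
  clear_value μ v c
  have hscale : ∀ p : EuclideanSpace ℝ (Fin d) × ℝ,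
      p.2 * (⟪v, p.1⟫_ℝ + c) = μ⁻¹ * (p.2 * (⟪w, p.1⟫_ℝ + b)) := by
    intro p
    rw [hv, hc, real_inner_smul_left]
    ring
  have hμinv : (0:ℝ) < μ⁻¹ := inv_pos.mpr hμpos
  have hfeasS : ∀ p ∈ S, 1 ≤ p.2 * (⟪v, p.1⟫_ℝ + c) := by
    intro p hp
    rw [hscale, ← inv_mul_cancel₀ (ne_of_gt hμpos)]
    exact mul_le_mul_of_nonneg_left (hori p hp) hμinv.le
  have hvnorm : ‖v‖ = μ⁻¹ := by
    rw [hv, norm_smul, hmm.1, mul_one, Real.norm_eq_abs, abs_of_pos hμinv]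
  set A := S.filter (fun p => p.2 * (⟪w, p.1⟫_ℝ + b) = μ) with hA
  have hA1 : ∀ p ∈ A, p.2 * (⟪v, p.1⟫_ℝ + c) = 1 := by
    intro p hp
    rw [hscale, (Finset.mem_filter.mp hp).2, inv_mul_cancel₀ (ne_of_gt hμpos)]
  have hAin : ∀ p ∈ S, p ∉ A → 1 < p.2 * (⟪v, p.1⟫_ℝ + c) := by
    intro p hp hpA
    have h2 : p.2 * (⟪w, p.1⟫_ℝ + b) ≠ μ := fun h => hpA (Finset.mem_filter.mpr ⟨hp, h⟩)
    have h3 : μ < p.2 * (⟪w, p.1⟫_ℝ + b) := lt_of_le_of_ne (hori p hp) (Ne.symm h2)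
    rw [hscale, ← inv_mul_cancel₀ (ne_of_gt hμpos)]
    exact mul_lt_mul_of_pos_left h3 hμinv
  set z : (EuclideanSpace ℝ (Fin d) × ℝ) → (EuclideanSpace ℝ (Fin d) × ℝ) :=
    fun p => p.2 • (p.1, (1:ℝ)) with hz
  set Z := A.image z with hZ
  set C : Set (EuclideanSpace ℝ (Fin d) × ℝ) :=
    {x | ∃ ν : (EuclideanSpace ℝ (Fin d) × ℝ) → ℝ,
      (∀ u ∈ Z, 0 ≤ ν u) ∧ ∑ u ∈ Z, ν u • u = x} with hCdef
  have htC : (v, (0:ℝ)) ∈ C := by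
    by_contra hc0
    have hCconv : Convex ℝ C := by
      rintro x ⟨ν1, hν1, hs1⟩ y ⟨ν2, hν2, hs2⟩ a1 a2 ha1 ha2 hab
      refine ⟨fun u => a1 * ν1 u + a2 * ν2 u, fun u hu =>
        add_nonneg (mul_nonneg ha1 (hν1 u hu)) (mul_nonneg ha2 (hν2 u hu)), ?_⟩
      simp only [add_smul, mul_smul, Finset.sum_add_distrib, ← Finset.smul_sum, hs1, hs2]
    have hCclosed : IsClosed C := cone_isClosed Z
    obtain ⟨f, r, hfr, hrt⟩ := geometric_hahn_banach_closed_point hCconv hCclosed hc0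
    have h0C : (0 : EuclideanSpace ℝ (Fin d) × ℝ) ∈ C :=
      ⟨fun _ => 0, fun u _ => le_refl 0, by simp⟩
    have hr0 : (0:ℝ) < r := by simpa using hfr 0 h0C
    have hfnp : ∀ x ∈ C, f x ≤ 0 := by
      intro x hx
      by_contra hposx
      push_neg at hposx
      obtain ⟨ν, hν, hνs⟩ := hx
      have hmem : ((r + 1) / f x) • x ∈ C := by
        refine ⟨fun u => ((r + 1) / f x) * ν u, fun u hu =>
          mul_nonneg (div_nonneg (by linarith) hposx.le) (hν u hu), ?_⟩
        simp only [mul_smul, ← Finset.smul_sum, hνs]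
      have h2 := hfr _ hmem
      rw [map_smul, smul_eq_mul, div_mul_cancel₀ _ (ne_of_gt hposx)] at h2
      linarith
    have hgen : ∀ p ∈ A, f (z p) ≤ 0 := by
      intro p hp
      apply hfnp
      refine ⟨fun u => if u = z p then 1 else 0, fun u _ => by by_cases h : u = z p <;> simp [h], ?_⟩
      have hzp : z p ∈ Z := by rw [hZ]; exact Finset.mem_image_of_mem z hp
      have hterm : ∀ u : EuclideanSpace ℝ (Fin d) × ℝ,
          ((if u = z p then (1:ℝ) else 0) • u) = (if u = z p then u else 0) := by
        intro u; split <;> simp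
      rw [Finset.sum_congr rfl fun u _ => hterm u,
        Finset.sum_ite_eq' Z (z p) (fun u => u), if_pos hzp]
    set uvec := (InnerProductSpace.toDual ℝ (EuclideanSpace ℝ (Fin d))).symm
      (f.comp (ContinuousLinearMap.inl ℝ (EuclideanSpace ℝ (Fin d)) ℝ)) with huvec
    set svar : ℝ := f (0, 1) with hsvar
    clear_value uvec svar
    have hfxy : ∀ (x : EuclideanSpace ℝ (Fin d)) (t : ℝ),
        f (x, t) = ⟪uvec, x⟫_ℝ + t * svar := by
      intro x t
      have h1 : ⟪uvec, x⟫_ℝ = f (x, 0) := by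
        rw [huvec, InnerProductSpace.toDual_symm_apply]
        rfl
      have h2 : (x, t) = (x, (0:ℝ)) + t • ((0 : EuclideanSpace ℝ (Fin d)), (1:ℝ)) := by
        simp [Prod.ext_iff]
      rw [h2, map_add, map_smul, h1, smul_eq_mul, hsvar]
    have huv : 0 < ⟪uvec, v⟫_ℝ := by
      have h3 : f (v, 0) = ⟪uvec, v⟫_ℝ := by rw [hfxy]; ring
      rw [h3] at hrt
      linarith
    have hup : ∀ p ∈ A, p.2 * (⟪uvec, p.1⟫_ℝ + svar) ≤ 0 := by
      intro p hp
      have h1 := hgen p hp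
      simp only [hz] at h1
      rw [map_smul, smul_eq_mul, hfxy, one_mul] at h1
      exact h1
    have hεex : ∃ ε : ℝ, 0 < ε ∧ ε * (‖uvec‖ ^ 2 + 1) ≤ ⟪uvec, v⟫_ℝ ∧
        ∀ p ∈ S, p ∉ A → ε * (p.2 * (⟪uvec, p.1⟫_ℝ + svar)) ≤ p.2 * (⟪v, p.1⟫_ℝ + c) - 1 := by
      have hd0 : (0:ℝ) < ‖uvec‖ ^ 2 + 1 := by positivity
      set ε0 := ⟪uvec, v⟫_ℝ / (‖uvec‖ ^ 2 + 1) with hε0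
      have hε0pos : 0 < ε0 := div_pos huv hd0
      have hε0le : ε0 * (‖uvec‖ ^ 2 + 1) ≤ ⟪uvec, v⟫_ℝ := by
        rw [hε0, div_mul_cancel₀ _ (ne_of_gt hd0)]
      set Q := S.filter (fun p => p ∉ A ∧ 0 < p.2 * (⟪uvec, p.1⟫_ℝ + svar)) with hQ
      by_cases hQne : Q.Nonempty
      · set ε1 := Q.inf' hQne (fun p =>
          (p.2 * (⟪v, p.1⟫_ℝ + c) - 1) / (p.2 * (⟪uvec, p.1⟫_ℝ + svar))) with hε1
        refine ⟨min ε0 ε1, ?_, ?_, ?_⟩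
        · refine lt_min hε0pos ?_
          rw [hε1, Finset.lt_inf'_iff]
          intro p hp
          obtain ⟨hpS, hpA2, hden2⟩ := Finset.mem_filter.mp hp
          have hnum : 0 < p.2 * (⟪v, p.1⟫_ℝ + c) - 1 := by
            have := hAin p hpS hpA2
            linarith
          exact div_pos hnum hden2
        · calc min ε0 ε1 * (‖uvec‖ ^ 2 + 1) ≤ ε0 * (‖uvec‖ ^ 2 + 1) :=
              mul_le_mul_of_nonneg_right (min_le_left _ _) hd0.le
            _ ≤ ⟪uvec, v⟫_ℝ := hε0le
        · intro p hpS hpA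
          by_cases hden : 0 < p.2 * (⟪uvec, p.1⟫_ℝ + svar)
          · have hpQ : p ∈ Q := Finset.mem_filter.mpr ⟨hpS, hpA, hden⟩
            have h5 : min ε0 ε1 ≤ (p.2 * (⟪v, p.1⟫_ℝ + c) - 1) /
                (p.2 * (⟪uvec, p.1⟫_ℝ + svar)) :=
              le_trans (min_le_right _ _) (Finset.inf'_le _ hpQ)
            exact (le_div_iff₀ hden).mp h5
          · push_neg at hden
            have h6 : min ε0 ε1 * (p.2 * (⟪uvec, p.1⟫_ℝ + svar)) ≤ 0 :=
              mul_nonpos_of_nonneg_of_nonpos (le_of_lt (lt_min hε0pos (by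
                rw [hε1, Finset.lt_inf'_iff]
                intro q hq
                obtain ⟨hqS, hqA2, hqden2⟩ := Finset.mem_filter.mp hq
                have hnum : 0 < q.2 * (⟪v, q.1⟫_ℝ + c) - 1 := by
                  have := hAin q hqS hqA2
                  linarith
                exact div_pos hnum hqden2))) hden
            have := hAin p hpS hpA
            linarith
      · refine ⟨ε0, hε0pos, hε0le, ?_⟩
        intro p hpS hpA
        have hden : p.2 * (⟪uvec, p.1⟫_ℝ + svar) ≤ 0 := by
          by_contra hd
          push_neg at hd
          exact hQne ⟨p, Finset.mem_filter.mpr ⟨hpS, hpA, hd⟩⟩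
        have h6 : ε0 * (p.2 * (⟪uvec, p.1⟫_ℝ + svar)) ≤ 0 :=
          mul_nonpos_of_nonneg_of_nonpos hε0pos.le hden
        have := hAin p hpS hpA
        linarith
    obtain ⟨ε, hεpos, hεa, hεb⟩ := hεex
    clear hfxy hgen hfnp hr0 h0C hfr hrt huvec hsvar hc0 hCconv hCclosed f
    set v' := v - ε • uvec with hv'
    set c' := c - ε * svar with hc'
    clear_value v' c'
    have hexp : ∀ p : EuclideanSpace ℝ (Fin d) × ℝ,
        p.2 * (⟪v', p.1⟫_ℝ + c') =
          p.2 * (⟪v, p.1⟫_ℝ + c) - ε * (p.2 * (⟪uvec, p.1⟫_ℝ + svar)) := by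
      intro p
      simp only [hv', hc', inner_sub_left, real_inner_smul_left]
      ring
    have hfeas' : ∀ p ∈ S, 1 ≤ p.2 * (⟪v', p.1⟫_ℝ + c') := by
      intro p hp
      rw [hexp]
      by_cases hpA : p ∈ A
      · have h1 := hA1 p hpA
        have h2 := hup p hpA
        have h3 := mul_nonpos_of_nonneg_of_nonpos hεpos.le h2
        linarith
      · have h3 := hεb p hp hpA
        linarith
    have hnormlt : ‖v'‖ < ‖v‖ := by
      have hx : ‖v'‖ ^ 2 = ‖v‖ ^ 2 - 2 * (ε * ⟪uvec, v⟫_ℝ) + ε ^ 2 * ‖uvec‖ ^ 2 := by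
        rw [hv', norm_sub_sq_real, real_inner_smul_right, real_inner_comm,
          norm_smul ε uvec, mul_pow, Real.norm_eq_abs, sq_abs]
      have h6 : ε ^ 2 * ‖uvec‖ ^ 2 ≤ ε * ⟪uvec, v⟫_ℝ := by
        have h6a := mul_le_mul_of_nonneg_left hεa hεpos.le
        nlinarith [h6a]
      have h7 : ‖v'‖ ^ 2 < ‖v‖ ^ 2 := by
        have h7a := mul_pos hεpos huv
        linarith
      nlinarith [norm_nonneg v', norm_nonneg v]
    set_option maxHeartbeats 2000000 in
    have hv'ne : v' ≠ 0 := by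
      intro h0
      have h1 := hfeas' pp0 hpp0S
      have h2 := hfeas' pn0 hpn0S
      have hz1 : ⟪v', pp0.1⟫_ℝ = 0 := by rw [h0]; exact inner_zero_left pp0.1
      have hz2 : ⟪v', pn0.1⟫_ℝ = 0 := by rw [h0]; exact inner_zero_left pn0.1
      rw [hz1, hpp0] at h1
      rw [hz2, hpn0] at h2
      linarith
    have hnpos : 0 < ‖v'‖ := norm_pos_iff.mpr hv'ne
    set w2 := ‖v'‖⁻¹ • v' with hw2
    set b2 := ‖v'‖⁻¹ * c' with hb2
    clear_value w2 b2
    have hw2n : ‖w2‖ = 1 := by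
      rw [hw2, norm_smul, Real.norm_eq_abs, abs_of_pos (inv_pos.mpr hnpos),
        inv_mul_cancel₀ (ne_of_gt hnpos)]
    have hw2e : ∀ p : EuclideanSpace ℝ (Fin d) × ℝ,
        p.2 * (⟪w2, p.1⟫_ℝ + b2) = ‖v'‖⁻¹ * (p.2 * (⟪v', p.1⟫_ℝ + c')) := by
      intro p
      rw [hw2, hb2, real_inner_smul_left]
      ring
    have hsep2 : Separates w2 b2 S := by
      intro p hp
      rw [hw2e]
      have := hfeas' p hp
      exact le_of_lt (mul_pos (inv_pos.mpr hnpos) (by linarith))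
    have hmarg2 : ‖v'‖⁻¹ ≤ Margin w2 b2 S := by
      apply le_margin hSne
      intro p hp
      rw [abs_eq_label (hlab p hp) (hsep2 p hp), hw2e]
      have h8 := hfeas' p hp
      exact le_mul_of_one_le_right (inv_pos.mpr hnpos).le h8
    have hcontra := hmm.2.2 w2 b2 hw2n hsep2
    have hio : μ < ‖v'‖⁻¹ := by
      have h9 : ‖v'‖ < μ⁻¹ := by rw [← hvnorm]; exact hnormlt
      have h10 := one_div_lt_one_div_of_lt hnpos h9
      rw [one_div, one_div, inv_inv] at h10
      exact h10
    linarith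
  obtain ⟨ν, hν, hνsum⟩ := htC
  obtain ⟨Z', hZ'sub, hli, ν', hν', hν'sum⟩ := conic_caratheodory Z ν hν
  set Z'' := Z'.filter (fun u => ν' u ≠ 0) with hZ''d
  have hZ''sub : Z'' ⊆ Z' := Finset.filter_subset _ _
  have hZ''sum : ∑ u ∈ Z'', ν' u • u = (v, (0:ℝ)) := by
    rw [hZ''d, Finset.sum_filter_of_ne, hν'sum, hνsum]
    intro u hu h h0
    rw [h0, zero_smul] at h
    exact h rfl
  set T := A.filter (fun p => z p ∈ Z'') with hT
  have hTA : T ⊆ A := Finset.filter_subset _ _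
  have hTS : T ⊆ S := hTA.trans (Finset.filter_subset _ _)
  have hzinj : Set.InjOn z T := by
    intro p hp q hq hpq
    have hpT : p ∈ T := hp
    have hqT : q ∈ T := hq
    simp only [hz] at hpq
    have hy : p.2 = q.2 := by
      have h1 := congrArg Prod.snd hpq
      simpa using h1
    have hyne : p.2 ≠ 0 := by
      rcases hlab p (hTS hpT) with h | h <;> rw [h] <;> norm_num
    have hx1 : p.1 = q.1 := by
      have h1 := congrArg Prod.fst hpq
      simp only [Prod.smul_fst] at h1
      rw [← hy] at h1
      exact smul_right_injective _ hyne h1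
    exact Prod.ext hx1 hy
  have himg : T.image z = Z'' := by
    apply Finset.Subset.antisymm
    · intro u hu
      obtain ⟨p, hp, rfl⟩ := Finset.mem_image.mp hu
      exact (Finset.mem_filter.mp hp).2
    · intro u hu
      have huZ : u ∈ Z := hZ'sub (hZ''sub hu)
      rw [hZ] at huZ
      obtain ⟨p, hpA, rfl⟩ := Finset.mem_image.mp huZ
      exact Finset.mem_image_of_mem z (Finset.mem_filter.mpr ⟨hpA, hu⟩)
  have hcardT : T.card ≤ d + 1 := by
    have h1 : T.card = Z''.card := by
      rw [← himg, Finset.card_image_of_injOn hzinj]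
    have h2 := hli.fintype_card_le_finrank
    rw [Fintype.card_coe] at h2
    have h3 : Module.finrank ℝ (EuclideanSpace ℝ (Fin d) × ℝ) = d + 1 := by
      rw [Module.finrank_prod, finrank_euclideanSpace_fin, Module.finrank_self]
    have h4 : Z''.card ≤ Z'.card := Finset.card_le_card hZ''sub
    rw [h1]
    omega
  set lam : (EuclideanSpace ℝ (Fin d) × ℝ) → ℝ := fun p => ν' (z p) with hlam
  have hlamsum : ∑ p ∈ T, lam p • z p = (v, (0:ℝ)) := by
    rw [← hZ''sum, ← himg,
      Finset.sum_image (fun x hx y hy h => hzinj hx hy h)]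
  have hlampos : ∀ p ∈ T, 0 < lam p := by
    intro p hp
    have h1 := (Finset.mem_filter.mp hp).2
    have h2 := (Finset.mem_filter.mp h1).2
    have h3 := hν' (z p) (hZ''sub h1)
    exact lt_of_le_of_ne h3 (Ne.symm h2)
  have hterm : ∀ p : EuclideanSpace ℝ (Fin d) × ℝ,
      lam p • z p = ((lam p * p.2) • p.1, lam p * p.2) := by
    intro p
    simp only [hz, smul_smul, Prod.smul_mk, smul_eq_mul, mul_one]
  rw [Finset.sum_congr rfl fun p _ => hterm p] at hlamsum
  have hfst : ∑ p ∈ T, (lam p * p.2) • p.1 = v := by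
    have h := congrArg Prod.fst hlamsum
    rw [Prod.fst_sum] at h
    simpa using h
  have hsnd : ∑ p ∈ T, lam p * p.2 = 0 := by
    have h := congrArg Prod.snd hlamsum
    rw [Prod.snd_sum] at h
    simpa using h
  have hinner : ∀ u : EuclideanSpace ℝ (Fin d),
      ⟪v, u⟫_ℝ = ∑ p ∈ T, (lam p * p.2) * ⟪p.1, u⟫_ℝ := by
    intro u
    conv_lhs => rw [← hfst]
    rw [sum_inner]
    exact Finset.sum_congr rfl fun p _ => real_inner_smul_left _ _ _
  have hsumlam : ∑ p ∈ T, lam p = μ⁻¹ * μ⁻¹ := by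
    have h1 := hinner v
    have h2 : ∀ p ∈ T, (lam p * p.2) * ⟪p.1, v⟫_ℝ = lam p - (lam p * p.2) * c := by
      intro p hp
      have h3 := hA1 p (hTA hp)
      rw [real_inner_comm]
      linear_combination lam p * h3
    have h4 : ⟪v, v⟫_ℝ = ∑ p ∈ T, lam p := by
      rw [h1, Finset.sum_congr rfl h2, Finset.sum_sub_distrib, ← Finset.sum_mul, hsnd,
        zero_mul, sub_zero]
    rw [← h4, real_inner_self_eq_norm_sq, hvnorm]
    ring
  have hsumpos : 0 < ∑ p ∈ T, lam p := by
    rw [hsumlam]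
    positivity
  have hTne : T.Nonempty := by
    rcases Finset.eq_empty_or_nonempty T with h | h
    · rw [h, Finset.sum_empty] at hsumpos
      exact absurd hsumpos (lt_irrefl 0)
    · exact h
  have hTpos : ∃ p ∈ T, p.2 = 1 := by
    by_contra hno
    push_neg at hno
    have hall : ∀ p ∈ T, p.2 = -1 := fun p hp => (hlab p (hTS hp)).resolve_left (hno p hp)
    have h1 : ∑ p ∈ T, lam p * p.2 = -∑ p ∈ T, lam p := by
      rw [← Finset.sum_neg_distrib]
      exact Finset.sum_congr rfl fun p hp => by rw [hall p hp]; ring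
    rw [hsnd] at h1
    linarith
  have hTneg : ∃ p ∈ T, p.2 = -1 := by
    by_contra hno
    push_neg at hno
    have hall : ∀ p ∈ T, p.2 = 1 := fun p hp => (hlab p (hTS hp)).resolve_right (hno p hp)
    have h1 : ∑ p ∈ T, lam p * p.2 = ∑ p ∈ T, lam p := by
      exact Finset.sum_congr rfl fun p hp => by rw [hall p hp]; ring
    rw [hsnd] at h1
    linarith
  have hbound : ∀ w' b', ‖w'‖ = 1 → Separates w' b' T → Margin w' b' T ≤ μ := by
    intro w' b' hw' hsep'
    set m := Margin w' b' T with hm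
    rcases le_or_gt m 0 with h | hmpos
    · linarith
    · have hor : ∀ p ∈ T, m ≤ p.2 * (⟪w', p.1⟫_ℝ + b') := by
        intro p hp
        have h1 := margin_le (w := w') (b := b') hp
        rwa [abs_eq_label (hlab p (hTS hp)) (hsep' p hp)] at h1
      have h2 := hinner w'
      have h3 : ∀ p ∈ T, (lam p * p.2) * ⟪p.1, w'⟫_ℝ =
          lam p * (p.2 * (⟪w', p.1⟫_ℝ + b')) - (lam p * p.2) * b' := by
        intro p hp
        rw [real_inner_comm]
        ring
      have h4 : ⟪v, w'⟫_ℝ = ∑ p ∈ T, lam p * (p.2 * (⟪w', p.1⟫_ℝ + b')) := by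
        rw [h2, Finset.sum_congr rfl h3, Finset.sum_sub_distrib, ← Finset.sum_mul, hsnd,
          zero_mul, sub_zero]
      have h5 : (∑ p ∈ T, lam p) * m ≤ ∑ p ∈ T, lam p * (p.2 * (⟪w', p.1⟫_ℝ + b')) := by
        rw [Finset.sum_mul]
        exact Finset.sum_le_sum fun p hp =>
          (mul_le_mul_of_nonneg_left (hor p hp) (hlampos p hp).le).trans_eq (by ring) |>.trans_eq rfl
      have h6 : ⟪v, w'⟫_ℝ ≤ ‖v‖ * ‖w'‖ := real_inner_le_norm v w'
      rw [hvnorm, hw', mul_one] at h6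
      rw [hsumlam] at h5
      have h7 : μ⁻¹ * μ⁻¹ * m ≤ μ⁻¹ := by linarith
      have hμmul : μ * μ⁻¹ = 1 := mul_inv_cancel₀ (ne_of_gt hμpos)
      calc m = (μ * μ⁻¹) * (μ * μ⁻¹) * m := by rw [hμmul]; ring
        _ = μ * μ * (μ⁻¹ * μ⁻¹ * m) := by ring
        _ ≤ μ * μ * μ⁻¹ := by
            apply mul_le_mul_of_nonneg_left h7
            positivity
        _ = μ * (μ * μ⁻¹) := by ring
        _ = μ := by rw [hμmul, mul_one]
  have hmargT : Margin w b T = μ := by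
    have hset : {r : ℝ | ∃ p ∈ T, r = |⟪w, p.1⟫_ℝ + b|} = {μ} := by
      ext r
      simp only [Set.mem_setOf_eq, Set.mem_singleton_iff]
      constructor
      · rintro ⟨p, hp, rfl⟩
        rw [abs_eq_label (hlab p (hTS hp)) (hmm.2.1 p (hTS hp))]
        exact (Finset.mem_filter.mp (hTA hp)).2
      · rintro rfl
        obtain ⟨p, hp⟩ := hTne
        refine ⟨p, hp, ?_⟩
        rw [abs_eq_label (hlab p (hTS hp)) (hmm.2.1 p (hTS hp))]
        exact ((Finset.mem_filter.mp (hTA hp)).2).symm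
    rw [Margin, hset, csInf_singleton]
  have hsepT : Separates w b T := fun p hp => hmm.2.1 p (hTS hp)
  have hmmT : IsMaxMargin w b T :=
    ⟨hmm.1, hsepT, fun w' b' h1 h2 => (hbound w' b' h1 h2).trans_eq hmargT.symm⟩
  refine ⟨T, hTS, hcardT, hmmT, ?_⟩
  intro w' b' hmm'
  have hm'1 : Margin w' b' T ≤ μ := hbound w' b' hmm'.1 hmm'.2.1
  have hm'2 : μ ≤ Margin w' b' T := by
    have h := hmm'.2.2 w b hmm.1 hsepT
    rwa [hmargT] at h
  have hor' : ∀ p ∈ T, μ ≤ p.2 * (⟪w', p.1⟫_ℝ + b') := by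
    intro p hp
    have h1 := margin_le (w := w') (b := b') hp
    rw [abs_eq_label (hlab p (hTS hp)) (hmm'.2.1 p hp)] at h1
    linarith
  have horw : ∀ p ∈ T, μ ≤ p.2 * (⟪w, p.1⟫_ℝ + b) := fun p hp => hori p (hTS hp)
  obtain ⟨pp, hppT, hpp⟩ := hTpos
  obtain ⟨pn, hpnT, hpn⟩ := hTneg
  have hww : w' = w := by
    by_contra hne
    have hsumne : w + w' ≠ 0 := by
      intro h0
      have hw'e : w' = -w := eq_neg_of_add_eq_zero_right h0
      have h1 := hor' pp hppT
      have h2 := horw pp hppT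
      have h3 := hor' pn hpnT
      have h4 := horw pn hpnT
      rw [hw'e, inner_neg_left] at h1 h3
      rw [hpp] at h1 h2
      rw [hpn] at h3 h4
      linarith
    set a := ‖w + w'‖ with ha
    have ha0 : 0 < a := norm_pos_iff.mpr hsumne
    have hinlt : ⟪w, w'⟫_ℝ < 1 := by
      have h5 : w - w' ≠ 0 := sub_ne_zero.mpr (Ne.symm hne)
      have h6 : 0 < ‖w - w'‖ ^ 2 := by
        have := norm_pos_iff.mpr h5
        positivity
      rw [norm_sub_sq_real, hmm.1, hmm'.1] at h6
      nlinarith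
    have ha2 : a < 2 := by
      have h7 : a ^ 2 = 2 + 2 * ⟪w, w'⟫_ℝ := by
        rw [ha, norm_add_sq_real, hmm.1, hmm'.1]
        ring
      nlinarith
    set w2 := a⁻¹ • (w + w') with hw2d
    set b2 := a⁻¹ * (b + b') with hb2d
    clear_value w2 b2
    have hw2n : ‖w2‖ = 1 := by
      rw [hw2d, norm_smul, Real.norm_eq_abs, abs_of_pos (inv_pos.mpr ha0), ← ha,
        inv_mul_cancel₀ (ne_of_gt ha0)]
    have hkey : ∀ p ∈ T, a⁻¹ * (2 * μ) ≤ p.2 * (⟪w2, p.1⟫_ℝ + b2) := by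
      intro p hp
      have h8 : p.2 * (⟪w2, p.1⟫_ℝ + b2) =
          a⁻¹ * (p.2 * (⟪w, p.1⟫_ℝ + b) + p.2 * (⟪w', p.1⟫_ℝ + b')) := by
        rw [hw2d, hb2d, real_inner_smul_left, inner_add_left]
        ring
      rw [h8]
      have h9 := horw p hp
      have h10 := hor' p hp
      exact mul_le_mul_of_nonneg_left (by linarith) (inv_pos.mpr ha0).le
    have hsep2 : Separates w2 b2 T := by
      intro p hp
      have h11 := hkey p hp
      have h12 : 0 < a⁻¹ * (2 * μ) := by positivity
      linarith
    have hmarg2 : a⁻¹ * (2 * μ) ≤ Margin w2 b2 T := by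
      apply le_margin hTne
      intro p hp
      rw [abs_eq_label (hlab p (hTS hp)) (hsep2 p hp)]
      exact hkey p hp
    have hcon := hmmT.2.2 w2 b2 hw2n hsep2
    rw [hmargT] at hcon
    have h13 : μ < a⁻¹ * (2 * μ) := by
      have h10 : a * a⁻¹ = 1 := mul_inv_cancel₀ (ne_of_gt ha0)
      nlinarith
    linarith
  have hbb : b' = b := by
    by_contra hne
    set bm := (b + b') / 2 with hbm
    have habs : 0 < |b' - b| := abs_pos.mpr (sub_ne_zero.mpr hne)
    have hkey : ∀ p ∈ T, μ + |b' - b| / 2 ≤ p.2 * (⟪w, p.1⟫_ℝ + bm) := by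
      intro p hp
      have h1 := horw p hp
      have h2 := hor' p hp
      rw [hww] at h2
      rcases le_total b b' with hbo | hbo
      · rw [abs_of_nonneg (by linarith : (0:ℝ) ≤ b' - b)]
        rcases hlab p (hTS hp) with hy | hy <;> rw [hy] at h1 h2 ⊢ <;> linarith
      · rw [abs_of_nonpos (by linarith : b' - b ≤ 0)]
        rcases hlab p (hTS hp) with hy | hy <;> rw [hy] at h1 h2 ⊢ <;> linarith
    have hsep2 : Separates w bm T := by
      intro p hp
      have h3 := hkey p hp
      linarith
    have hmarg2 : μ + |b' - b| / 2 ≤ Margin w bm T := by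
      apply le_margin hTne
      intro p hp
      rw [abs_eq_label (hlab p (hTS hp)) (hsep2 p hp)]
      exact hkey p hp
    have hcon := hmmT.2.2 w bm hmm.1 hsep2
    rw [hmargT] at hcon
    linarith
  rw [hww, hbb]
end
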